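/- arXiv:2601.15609 — 2 statements merged into one kernel-verified Lean document; each statement's English description precedes it below -/
import Mathlib

section
/- Under the setup of the partition-function lower bound, suppose advantages are normalized binary: A₊ = (1 − p⁺)/σ and A₋ = −p⁺/σ for some batch accuracy p⁺ ∈ [0,1] and σ > 0, with Σ_{i∈S⁺} N(i) = G·p⁺ and Σ_{j∈S⁻} N(j) = G·(1 − p⁺). Define Δπ = min_{i∈S⁺} π_ref(i) − max_{j∈S⁻} π_ref(j). Then Z' ≥ 1 + (p⁺(1 − p⁺)/(βσ))·Δπ. In particular, if Δπ > 0 and 0 < p⁺ < 1 then Z' > 1, and hence every unsampled mode is strictly suppressed: π̂(o) < π_ref(o) whenever N(o) = 0. -/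
open Finset

theorem stmt5 {O : Type*} [Fintype O] [DecidableEq O] (pref : O → ℝ)
    (hpos : ∀ o, 0 < pref o) (hsum : ∑ o, pref o = 1)
    (β σ : ℝ) (hβ : 0 < β) (hσ : 0 < σ)
    (G : ℕ) (hG : 1 ≤ G)
    (N : O → ℕ) (hN : ∑ o, N o = G)
    (pacc : ℝ) (hp0 : 0 ≤ pacc) (hp1 : pacc ≤ 1)
    (Aplus Aminus : ℝ)
    (hAplus : Aplus = (1 - pacc) / σ) (hAminus : Aminus = -pacc / σ)
    (Sp Sm : Finset O) (hdisj : Disjoint Sp Sm)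
    (hSpne : Sp.Nonempty) (hSmne : Sm.Nonempty)
    (A : O → ℝ)
    (hSp : ∀ o ∈ Sp, A o = Aplus ∧ 0 < N o)
    (hSm : ∀ o ∈ Sm, A o = Aminus ∧ 0 < N o)
    (hout : ∀ o, o ∉ Sp → o ∉ Sm → N o = 0)
    (hNp : (∑ i ∈ Sp, (N i : ℝ)) = G * pacc)
    (hNm : (∑ j ∈ Sm, (N j : ℝ)) = G * (1 - pacc))
    (Δπ : ℝ)
    (hΔ : Δπ = (Sp.inf' hSpne pref) - (Sm.sup' hSmne pref))
    (Z' : ℝ) (hZ' : Z' = ∑ o, pref o * Real.exp ((N o : ℝ) * A o / (β * G)))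
    (phat : O → ℝ)
    (hphat : ∀ o, phat o = pref o * Real.exp ((N o : ℝ) * A o / (β * G)) / Z') :
    1 + (pacc * (1 - pacc) / (β * σ)) * Δπ ≤ Z' ∧
    (0 < Δπ → 0 < pacc → pacc < 1 →
      1 < Z' ∧ ∀ o, N o = 0 → phat o < pref o) := by
  have hGpos : (0:ℝ) < G := by exact_mod_cast Nat.lt_of_lt_of_le Nat.zero_lt_one hG
  have hβG : (0:ℝ) < β * G := mul_pos hβ hGpos
  set mp := Sp.inf' hSpne pref with hmp
  set Mp := Sm.sup' hSmne pref with hMp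
  have hAp0 : 0 ≤ Aplus := by
    rw [hAplus]; exact div_nonneg (by linarith) hσ.le
  have hAm0 : Aminus ≤ 0 := by
    rw [hAminus]; exact div_nonpos_of_nonpos_of_nonneg (by linarith) hσ.le
  -- step 1
  have h1 : 1 + (∑ o, pref o * ((N o : ℝ) * A o)) / (β * G) ≤ Z' := by
    rw [hZ']
    have key : ∀ o ∈ (univ : Finset O),
        pref o * (1 + (N o : ℝ) * A o / (β*G)) ≤ pref o * Real.exp ((N o : ℝ) * A o / (β*G)) := by
      intro o _
      apply mul_le_mul_of_nonneg_left _ (hpos o).le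
      have := Real.add_one_le_exp ((N o : ℝ) * A o / (β*G))
      linarith
    calc 1 + (∑ o, pref o * ((N o : ℝ) * A o)) / (β * G)
        = ∑ o, pref o * (1 + (N o : ℝ) * A o / (β*G)) := by
          simp only [mul_add, mul_one, Finset.sum_add_distrib, hsum, ← mul_div_assoc,
            ← Finset.sum_div]
      _ ≤ _ := Finset.sum_le_sum key
  -- step 2 : split
  have hsplit : ∑ o, pref o * ((N o:ℝ) * A o)
      = (∑ i ∈ Sp, pref i * ((N i:ℝ) * A i)) + ∑ j ∈ Sm, pref j * ((N j:ℝ) * A j) := by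
    rw [← Finset.sum_union hdisj]
    refine (Finset.sum_subset (Finset.subset_univ _) ?_).symm
    intro o _ ho
    have hN0 : N o = 0 := hout o (fun h => ho (Finset.mem_union_left _ h))
      (fun h => ho (Finset.mem_union_right _ h))
    simp [hN0]
  -- step 3 : bounds
  have hSpB : Aplus * (mp * (G * pacc)) ≤ ∑ i ∈ Sp, pref i * ((N i:ℝ) * A i) := by
    have heq : ∑ i ∈ Sp, pref i * ((N i:ℝ) * A i) = Aplus * ∑ i ∈ Sp, pref i * (N i:ℝ) := by
      rw [Finset.mul_sum]
      refine Finset.sum_congr rfl fun i hi => ?_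
      rw [(hSp i hi).1]; ring
    rw [heq]
    refine mul_le_mul_of_nonneg_left ?_ hAp0
    rw [← hNp, Finset.mul_sum]
    refine Finset.sum_le_sum fun i hi => ?_
    exact mul_le_mul_of_nonneg_right (Finset.inf'_le _ hi) (Nat.cast_nonneg _)
  have hSmB : Aminus * (Mp * (G * (1 - pacc))) ≤ ∑ j ∈ Sm, pref j * ((N j:ℝ) * A j) := by
    have heq : ∑ j ∈ Sm, pref j * ((N j:ℝ) * A j) = Aminus * ∑ j ∈ Sm, pref j * (N j:ℝ) := by
      rw [Finset.mul_sum]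
      refine Finset.sum_congr rfl fun j hj => ?_
      rw [(hSm j hj).1]; ring
    rw [heq]
    refine mul_le_mul_of_nonpos_left ?_ hAm0
    rw [← hNm, Finset.mul_sum]
    refine Finset.sum_le_sum fun j hj => ?_
    exact mul_le_mul_of_nonneg_right (Finset.le_sup' _ hj) (Nat.cast_nonneg _)
  -- combine
  have hS : (G * (pacc * (1 - pacc)) / σ) * Δπ ≤ ∑ o, pref o * ((N o:ℝ) * A o) := by
    rw [hsplit]
    have : (G * (pacc * (1 - pacc)) / σ) * Δπ
        = Aplus * (mp * (G * pacc)) + Aminus * (Mp * (G * (1 - pacc))) := by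
      rw [hΔ, hAplus, hAminus]
      field_simp
      ring
    rw [this]
    exact add_le_add hSpB hSmB
  have main : 1 + (pacc * (1 - pacc) / (β * σ)) * Δπ ≤ Z' := by
    have hdiv : (pacc * (1 - pacc) / (β * σ)) * Δπ
        = ((G * (pacc * (1 - pacc)) / σ) * Δπ) / (β * G) := by
      field_simp
    rw [hdiv]
    refine le_trans ?_ h1
    have := (div_le_div_iff_of_pos_right hβG).mpr hS
    linarith
  refine ⟨main, fun hΔpos hp0' hp1' => ?_⟩
  have hc : 0 < (pacc * (1 - pacc) / (β * σ)) * Δπ := by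
    apply mul_pos _ hΔpos
    apply div_pos (mul_pos hp0' (by linarith)) (mul_pos hβ hσ)
  have hZ1 : 1 < Z' := by linarith
  refine ⟨hZ1, fun o hNo => ?_⟩
  rw [hphat o, hNo]
  simp only [Nat.cast_zero, zero_mul, zero_div, Real.exp_zero, mul_one]
  exact div_lt_self (hpos o) hZ1
end

section
/- Let O be a finite set, π_ref and π_t positive probability distributions on O, β > 0, η > 0 with ηβ < 1, counts N : O → ℕ summing to G, and advantages A : O → ℝ. Let π̂(o) = π_ref(o)·exp(N(o)A(o)/(βG))/Z' be the batch-optimal policy. Define the updated log-probabilities by gradient ascent in log-space on the empirical objective: log π_{t+1}(o) = log π_t(o) + η·[N(o)A(o)/G − β(log π_t(o) − log π_ref(o) + 1)] + C, with C chosen so π_{t+1} is normalized. Then π_{t+1}(o) ∝ π_t(o)^{1−ηβ} · π̂(o)^{ηβ}, i.e., the updated policy is the normalized geometric interpolation between the current policy and the batch-optimal policy with weight ηβ. -/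
open Finset

theorem stmt10 {O : Type*} [Fintype O] (pref pt : O → ℝ)
    (hrefpos : ∀ o, 0 < pref o) (hrefsum : ∑ o, pref o = 1)
    (htpos : ∀ o, 0 < pt o) (htsum : ∑ o, pt o = 1)
    (β η : ℝ) (hβ : 0 < β) (hη : 0 < η) (hηβ : η * β < 1)
    (G : ℕ) (hG : 1 ≤ G)
    (N : O → ℕ) (hN : ∑ o, N o = G) (A : O → ℝ)
    (Z' : ℝ) (hZ' : Z' = ∑ o, pref o * Real.exp ((N o : ℝ) * A o / (β * G)))
    (phat : O → ℝ)
    (hphat : ∀ o, phat o = pref o * Real.exp ((N o : ℝ) * A o / (β * G)) / Z')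
    (pnext : O → ℝ) (C : ℝ)
    (hnextpos : ∀ o, 0 < pnext o) (hnextsum : ∑ o, pnext o = 1)
    (hupdate : ∀ o, Real.log (pnext o) =
      Real.log (pt o) +
        η * ((N o : ℝ) * A o / G - β * (Real.log (pt o) - Real.log (pref o) + 1)) + C) :
    ∃ c : ℝ, 0 < c ∧
      ∀ o, pnext o = c * (pt o) ^ (1 - η * β) * (phat o) ^ (η * β) := by
  have hne : Nonempty O := by
    by_contra h
    rw [not_nonempty_iff] at h
    simp [Finset.univ_eq_empty] at hrefsum
  have hGpos : (0:ℝ) < G := by exact_mod_cast Nat.lt_of_lt_of_le Nat.zero_lt_one hG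
  have hZpos : 0 < Z' := by
    rw [hZ']
    exact Finset.sum_pos (fun o _ => mul_pos (hrefpos o) (Real.exp_pos _)) univ_nonempty
  have hphatpos : ∀ o, 0 < phat o := fun o => by
    rw [hphat o]; exact div_pos (mul_pos (hrefpos o) (Real.exp_pos _)) hZpos
  have hlogphat : ∀ o, Real.log (phat o) =
      Real.log (pref o) + (N o : ℝ) * A o / (β * G) - Real.log Z' := by
    intro o
    rw [hphat o, Real.log_div (mul_pos (hrefpos o) (Real.exp_pos _)).ne' hZpos.ne',
      Real.log_mul (hrefpos o).ne' (Real.exp_pos _).ne', Real.log_exp]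
  refine ⟨Real.exp (η * β * (Real.log Z' - 1) + C), Real.exp_pos _, fun o => ?_⟩
  have key : Real.log (pnext o) = (η * β * (Real.log Z' - 1) + C)
      + (1 - η * β) * Real.log (pt o) + η * β * Real.log (phat o) := by
    rw [hupdate o, hlogphat o]
    have hA : (N o : ℝ) * A o / G = β * ((N o : ℝ) * A o / (β * G)) := by
      field_simp
    rw [hA]; ring
  have := congrArg Real.exp key
  rw [Real.exp_log (hnextpos o)] at this
  rw [this, Real.exp_add, Real.exp_add, Real.rpow_def_of_pos (htpos o),
    Real.rpow_def_of_pos (hphatpos o)]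
  ring_nf
end
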